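/- Let (𝒪,𝒜,T,e,≼) be a Direct Preference Process such that the restriction of ≼ to Dist(Ω^e) is a total consistent preorder. If a policy π satisfies D^π(h_t) ≽ D^π(h_t·a) for every attainable history h_t of length less than T and every action a, then π is a ≼-optimal policy. -/

import Mathlib

open Finset

/-- A history: an initial observation together with a list of action-observation pairs. -/
abbrev Hist (O A : Type*) := O × List (A × O)

/-- The length (time index) of a history. -/
def hlen {O A : Type*} (h : Hist O A) : ℕ := h.2.length

/-- Append an action-observation pair to a history. -/
def hext {O A : Type*} (h : Hist O A) (a : A) (o : O) : Hist O A :=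
  (h.1, h.2 ++ [(a, o)])

/-- The length-`t` prefix of a history/trajectory. -/
def hpre {O A : Type*} (h : Hist O A) (t : ℕ) : Hist O A := (h.1, h.2.take t)

section DPP

variable {O A : Type*} [Fintype O] [Fintype A] [DecidableEq O] [DecidableEq A]

/-- The finite set of all length-`T` histories (trajectories). -/
def trajFinset (O A : Type*) [Fintype O] [Fintype A] [DecidableEq O] [DecidableEq A]
    (T : ℕ) : Finset (Hist O A) :=
  Finset.image (fun p : O × (Fin T → A × O) => ((p.1, List.ofFn p.2) : Hist O A))
    Finset.univ

/-- `π` is a policy: a distribution over actions for each history. -/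
def IsPolicy (π : Hist O A → A → ℝ) : Prop :=
  ∀ h, (∀ a, 0 ≤ π h a) ∧ ∑ a, π h a = 1

/-- `(ρ0, ρ)` is an environment: an initial observation distribution and
history-dependent transition probabilities. -/
def IsEnv (ρ0 : O → ℝ) (ρ : Hist O A → A → O → ℝ) : Prop :=
  ((∀ o, 0 ≤ ρ0 o) ∧ ∑ o, ρ0 o = 1) ∧
    ∀ h a, (∀ o, 0 ≤ ρ h a o) ∧ ∑ o, ρ h a o = 1

/-- `Dpi ρ π n h` : the distribution over trajectories induced by starting at `h`
(with `n` steps remaining) and following policy `π` in environment `ρ`. -/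
noncomputable def Dpi (ρ : Hist O A → A → O → ℝ) (π : Hist O A → A → ℝ) :
    ℕ → Hist O A → Hist O A → ℝ
  | 0, h, ω => if ω = h then 1 else 0
  | n + 1, h, ω => ∑ a, π h a * ∑ o, ρ h a o * Dpi ρ π n (hext h a o) ω

/-- `D^π(h)` with horizon `T`. -/
noncomputable def DpiH (T : ℕ) (ρ : Hist O A → A → O → ℝ) (π : Hist O A → A → ℝ)
    (h : Hist O A) : Hist O A → ℝ :=
  Dpi ρ π (T - hlen h) h

/-- `D^π(h · a)` : take action `a` at `h`, then follow `π`. -/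
noncomputable def DpiA (T : ℕ) (ρ : Hist O A → A → O → ℝ) (π : Hist O A → A → ℝ)
    (h : Hist O A) (a : A) : Hist O A → ℝ :=
  fun ω => ∑ o, ρ h a o * Dpi ρ π (T - hlen h - 1) (hext h a o) ω

/-- Attainable histories in environment `(ρ0, ρ)`. -/
inductive Attainable (ρ0 : O → ℝ) (ρ : Hist O A → A → O → ℝ) : Hist O A → Prop
  | base (o : O) : 0 < ρ0 o → Attainable ρ0 ρ (o, ([] : List (A × O)))
  | step (h : Hist O A) (a : A) (o : O) :
      Attainable ρ0 ρ h → 0 < ρ h a o → Attainable ρ0 ρ (hext h a o)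

/-- A distribution over trajectories (length-`T` histories). -/
def IsTrajDist (T : ℕ) (D : Hist O A → ℝ) : Prop :=
  (∀ ω, 0 ≤ D ω) ∧ (∀ ω, D ω ≠ 0 → hlen ω = T) ∧
    ∑ ω ∈ trajFinset O A T, D ω = 1

/-- A distribution over the attainable trajectories `Ω^e`. -/
def IsAttDist (T : ℕ) (ρ0 : O → ℝ) (ρ : Hist O A → A → O → ℝ)
    (D : Hist O A → ℝ) : Prop :=
  IsTrajDist T D ∧ ∀ ω, D ω ≠ 0 → Attainable ρ0 ρ ω

/-- Pointwise convex combination. -/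
def mix {X : Type*} (α : ℝ) (A B : X → ℝ) : X → ℝ :=
  fun x => α * A x + (1 - α) * B x

/-- The restriction of `R` to `Dist(Ω^e)` is a total consistent preorder. -/
def RestrTotalConsistentPreorder (T : ℕ) (ρ0 : O → ℝ)
    (ρ : Hist O A → A → O → ℝ) (R : (Hist O A → ℝ) → (Hist O A → ℝ) → Prop) : Prop :=
  (∀ D, IsAttDist T ρ0 ρ D → R D D) ∧
  (∀ D₁ D₂ D₃, IsAttDist T ρ0 ρ D₁ → IsAttDist T ρ0 ρ D₂ → IsAttDist T ρ0 ρ D₃ →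
    R D₁ D₂ → R D₂ D₃ → R D₁ D₃) ∧
  (∀ D₁ D₂, IsAttDist T ρ0 ρ D₁ → IsAttDist T ρ0 ρ D₂ → (R D₁ D₂ ∨ R D₂ D₁)) ∧
  (∀ α : ℝ, 0 < α → α < 1 → ∀ D₁ D₂ D₃, IsAttDist T ρ0 ρ D₁ →
    IsAttDist T ρ0 ρ D₂ → IsAttDist T ρ0 ρ D₃ →
    R D₁ D₂ → R (mix α D₁ D₃) (mix α D₂ D₃))

/-- `π` is a `≼`-optimal policy. -/
def OptimalPolicy (T : ℕ) (ρ0 : O → ℝ) (ρ : Hist O A → A → O → ℝ)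
    (R : (Hist O A → ℝ) → (Hist O A → ℝ) → Prop) (π : Hist O A → A → ℝ) : Prop :=
  ∀ h, Attainable ρ0 ρ h → hlen h ≤ T →
    ∀ π', IsPolicy π' → R (DpiH T ρ π' h) (DpiH T ρ π h)

/-- The optimal action set of policy `π` at history `h`. -/
def OptActions (T : ℕ) (ρ : Hist O A → A → O → ℝ)
    (R : (Hist O A → ℝ) → (Hist O A → ℝ) → Prop) (π : Hist O A → A → ℝ)
    (h : Hist O A) : Set A :=
  {a | ∀ a', R (DpiA T ρ π h a') (DpiA T ρ π h a)}

/-! ### Auxiliary lemmas -/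

lemma aux_hlen_hext (h : Hist O A) (a : A) (o : O) :
    hlen (hext h a o) = hlen h + 1 := by
  simp [hlen, hext]

lemma aux_mem_trajFinset {T : ℕ} {ω : Hist O A} :
    ω ∈ trajFinset O A T ↔ hlen ω = T := by
  constructor
  · intro hmem
    simp only [trajFinset, Finset.mem_image, Finset.mem_univ, true_and] at hmem
    obtain ⟨p, hp⟩ := hmem
    rw [← hp]
    simp [hlen]
  · intro hl
    simp only [trajFinset, Finset.mem_image, Finset.mem_univ, true_and]
    refine ⟨⟨ω.1, fun i => ω.2.get (Fin.cast hl.symm i)⟩, ?_⟩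
    have h2 : List.ofFn (fun i : Fin T => ω.2.get (Fin.cast hl.symm i)) = ω.2 := by
      apply List.ext_get
      · simp only [List.length_ofFn]; exact hl.symm
      · intro i h1 h2
        simp
        rfl
    show ((ω.1, List.ofFn fun i : Fin T => ω.2.get (Fin.cast hl.symm i)) : Hist O A) = ω
    rw [h2]

lemma aux_Dpi_nonneg {ρ0 : O → ℝ} {ρ : Hist O A → A → O → ℝ} (henv : IsEnv ρ0 ρ)
    {σ : Hist O A → A → ℝ} (hσ : IsPolicy σ) :
    ∀ n h ω, 0 ≤ Dpi ρ σ n h ω := by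
  intro n
  induction n with
  | zero =>
    intro h ω
    simp only [Dpi]
    split <;> norm_num
  | succ n ih =>
    intro h ω
    simp only [Dpi]
    apply Finset.sum_nonneg
    intro a _
    apply mul_nonneg ((hσ h).1 a)
    apply Finset.sum_nonneg
    intro o _
    exact mul_nonneg ((henv.2 h a).1 o) (ih _ _)

lemma aux_Dpi_len {ρ : Hist O A → A → O → ℝ} {σ : Hist O A → A → ℝ} :
    ∀ n (h ω : Hist O A), Dpi ρ σ n h ω ≠ 0 → hlen ω = hlen h + n := by
  intro n
  induction n with
  | zero =>
    intro h ω hne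
    simp only [Dpi] at hne
    split at hne
    · subst ‹ω = h›; simp
    · exact absurd rfl hne
  | succ n ih =>
    intro h ω hne
    simp only [Dpi] at hne
    obtain ⟨a, -, ha⟩ := Finset.exists_ne_zero_of_sum_ne_zero hne
    have h2 : (∑ o, ρ h a o * Dpi ρ σ n (hext h a o) ω) ≠ 0 := by
      intro hz; simp [hz] at ha
    obtain ⟨o, -, ho⟩ := Finset.exists_ne_zero_of_sum_ne_zero h2
    have h3 : Dpi ρ σ n (hext h a o) ω ≠ 0 := by
      intro hz; simp [hz] at ho
    have := ih (hext h a o) ω h3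
    rw [this, aux_hlen_hext]; omega

lemma aux_Dpi_sum {ρ0 : O → ℝ} {ρ : Hist O A → A → O → ℝ} (henv : IsEnv ρ0 ρ)
    {σ : Hist O A → A → ℝ} (hσ : IsPolicy σ) :
    ∀ n (h : Hist O A), ∑ ω ∈ trajFinset O A (hlen h + n), Dpi ρ σ n h ω = 1 := by
  intro n
  induction n with
  | zero =>
    intro h
    have hmem : h ∈ trajFinset O A (hlen h + 0) := by
      rw [aux_mem_trajFinset]
      simp
    rw [Finset.sum_eq_single h]
    · simp [Dpi]
    · intro ω _ hne; simp [Dpi, hne]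
    · intro habs; exact absurd hmem habs
  | succ n ih =>
    intro h
    simp only [Dpi]
    rw [Finset.sum_comm]
    have : ∀ a ∈ Finset.univ (α := A),
        (∑ ω ∈ trajFinset O A (hlen h + (n+1)),
          σ h a * ∑ o, ρ h a o * Dpi ρ σ n (hext h a o) ω) = σ h a := by
      intro a _
      rw [← Finset.mul_sum]
      have : (∑ ω ∈ trajFinset O A (hlen h + (n+1)),
          ∑ o, ρ h a o * Dpi ρ σ n (hext h a o) ω) = 1 := by
        rw [Finset.sum_comm]
        have : ∀ o ∈ Finset.univ (α := O),
            (∑ ω ∈ trajFinset O A (hlen h + (n+1)),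
              ρ h a o * Dpi ρ σ n (hext h a o) ω) = ρ h a o := by
          intro o _
          rw [← Finset.mul_sum]
          have hh : hlen h + (n + 1) = hlen (hext h a o) + n := by
            rw [aux_hlen_hext]; omega
          rw [hh, ih (hext h a o), mul_one]
        rw [Finset.sum_congr rfl this, (henv.2 h a).2]
      rw [this, mul_one]
    rw [Finset.sum_congr rfl this, (hσ h).2]

lemma aux_Dpi_attainable {ρ0 : O → ℝ} {ρ : Hist O A → A → O → ℝ} (henv : IsEnv ρ0 ρ)
    {σ : Hist O A → A → ℝ} :
    ∀ n (h ω : Hist O A), Attainable ρ0 ρ h → Dpi ρ σ n h ω ≠ 0 → Attainable ρ0 ρ ω := by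
  intro n
  induction n with
  | zero =>
    intro h ω hatt hne
    simp only [Dpi] at hne
    split at hne
    · subst ‹ω = h›; exact hatt
    · exact absurd rfl hne
  | succ n ih =>
    intro h ω hatt hne
    simp only [Dpi] at hne
    obtain ⟨a, -, ha⟩ := Finset.exists_ne_zero_of_sum_ne_zero hne
    have h2 : (∑ o, ρ h a o * Dpi ρ σ n (hext h a o) ω) ≠ 0 := by
      intro hz; simp [hz] at ha
    obtain ⟨o, -, ho⟩ := Finset.exists_ne_zero_of_sum_ne_zero h2
    have hρ : ρ h a o ≠ 0 := by intro hz; simp [hz] at ho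
    have h3 : Dpi ρ σ n (hext h a o) ω ≠ 0 := by intro hz; simp [hz] at ho
    have hρpos : 0 < ρ h a o := lt_of_le_of_ne ((henv.2 h a).1 o) (Ne.symm hρ)
    exact ih (hext h a o) ω (Attainable.step h a o hatt hρpos) h3

lemma aux_isAttDist_Dpi {T : ℕ} {ρ0 : O → ℝ} {ρ : Hist O A → A → O → ℝ}
    (henv : IsEnv ρ0 ρ) {σ : Hist O A → A → ℝ} (hσ : IsPolicy σ)
    {n : ℕ} {h : Hist O A} (hatt : Attainable ρ0 ρ h) (hT : hlen h + n = T) :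
    IsAttDist T ρ0 ρ (Dpi ρ σ n h) := by
  refine ⟨⟨fun ω => aux_Dpi_nonneg henv hσ n h ω, fun ω hne => ?_, ?_⟩,
    fun ω hne => aux_Dpi_attainable henv n h ω hatt hne⟩
  · rw [aux_Dpi_len n h ω hne, hT]
  · rw [← hT]; exact aux_Dpi_sum henv hσ n h

lemma aux_isAttDist_sum {T : ℕ} {ρ0 : O → ℝ} {ρ : Hist O A → A → O → ℝ}
    {ι : Type*} (s : Finset ι) (w : ι → ℝ) (F : ι → Hist O A → ℝ)
    (hw0 : ∀ i ∈ s, 0 ≤ w i) (hw1 : ∑ i ∈ s, w i = 1)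
    (hF : ∀ i ∈ s, w i ≠ 0 → IsAttDist T ρ0 ρ (F i)) :
    IsAttDist T ρ0 ρ (fun ω => ∑ i ∈ s, w i * F i ω) := by
  have key : ∀ i ∈ s, ∀ ω, w i ≠ 0 → 0 ≤ w i * F i ω ∧ (w i * F i ω ≠ 0 → F i ω ≠ 0) := by
    intro i hi ω hne
    constructor
    · exact mul_nonneg (hw0 i hi) ((hF i hi hne).1.1 ω)
    · intro hz hz2; simp [hz2] at hz
  refine ⟨⟨?_, ?_, ?_⟩, ?_⟩
  · intro ω
    apply Finset.sum_nonneg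
    intro i hi
    by_cases hne : w i = 0
    · simp [hne]
    · exact ((key i hi ω hne).1)
  · intro ω hne
    obtain ⟨i, hi, hterm⟩ := Finset.exists_ne_zero_of_sum_ne_zero hne
    have hwi : w i ≠ 0 := by intro hz; simp [hz] at hterm
    have hFi : F i ω ≠ 0 := by intro hz; simp [hz] at hterm
    exact (hF i hi hwi).1.2.1 ω hFi
  · rw [Finset.sum_comm]
    have : ∀ i ∈ s, (∑ ω ∈ trajFinset O A T, w i * F i ω) = w i := by
      intro i hi
      rw [← Finset.mul_sum]
      by_cases hne : w i = 0
      · simp [hne]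
      · rw [(hF i hi hne).1.2.2, mul_one]
    rw [Finset.sum_congr rfl this, hw1]
  · intro ω hne
    obtain ⟨i, hi, hterm⟩ := Finset.exists_ne_zero_of_sum_ne_zero hne
    have hwi : w i ≠ 0 := by intro hz; simp [hz] at hterm
    have hFi : F i ω ≠ 0 := by intro hz; simp [hz] at hterm
    exact (hF i hi hwi).2 ω hFi

lemma aux_isAttDist_mix {T : ℕ} {ρ0 : O → ℝ} {ρ : Hist O A → A → O → ℝ}
    {α : ℝ} (h0 : 0 ≤ α) (h1 : α ≤ 1) {D₁ D₂ : Hist O A → ℝ}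
    (hD₁ : IsAttDist T ρ0 ρ D₁) (hD₂ : IsAttDist T ρ0 ρ D₂) :
    IsAttDist T ρ0 ρ (mix α D₁ D₂) := by
  have hsup : ∀ ω, mix α D₁ D₂ ω ≠ 0 → D₁ ω ≠ 0 ∨ D₂ ω ≠ 0 := by
    intro ω hne
    by_contra hc
    push_neg at hc
    simp [mix, hc.1, hc.2] at hne
  refine ⟨⟨?_, ?_, ?_⟩, ?_⟩
  · intro ω
    exact add_nonneg (mul_nonneg h0 (hD₁.1.1 ω)) (mul_nonneg (by linarith) (hD₂.1.1 ω))
  · intro ω hne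
    rcases hsup ω hne with h | h
    · exact hD₁.1.2.1 ω h
    · exact hD₂.1.2.1 ω h
  · simp only [mix, Finset.sum_add_distrib, ← Finset.mul_sum, hD₁.1.2.2, hD₂.1.2.2]
    ring
  · intro ω hne
    rcases hsup ω hne with h | h
    · exact hD₁.2 ω h
    · exact hD₂.2 ω h

lemma aux_R_sum {T : ℕ} {ρ0 : O → ℝ} {ρ : Hist O A → A → O → ℝ}
    {R : (Hist O A → ℝ) → (Hist O A → ℝ) → Prop}
    (hR : RestrTotalConsistentPreorder T ρ0 ρ R)
    {ι : Type*} [DecidableEq ι] (s : Finset ι) :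
    ∀ (w : ι → ℝ) (F G : ι → Hist O A → ℝ),
    (∀ i ∈ s, 0 ≤ w i) → (∑ i ∈ s, w i = 1) →
    (∀ i ∈ s, w i ≠ 0 → IsAttDist T ρ0 ρ (F i)) →
    (∀ i ∈ s, w i ≠ 0 → IsAttDist T ρ0 ρ (G i)) →
    (∀ i ∈ s, w i ≠ 0 → R (F i) (G i)) →
    R (fun ω => ∑ i ∈ s, w i * F i ω) (fun ω => ∑ i ∈ s, w i * G i ω) := by
  induction s using Finset.induction_on with
  | empty => intro w F G _ hw1 _ _ _; simp at hw1
  | @insert a s ha ih =>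
    intro w F G hw0 hw1 hF hG hFG
    rw [Finset.sum_insert ha] at hw1
    by_cases hwa : w a = 0
    · have e1 : (fun ω => ∑ i ∈ insert a s, w i * F i ω)
          = fun ω => ∑ i ∈ s, w i * F i ω := by
        funext ω; rw [Finset.sum_insert ha, hwa]; ring
      have e2 : (fun ω => ∑ i ∈ insert a s, w i * G i ω)
          = fun ω => ∑ i ∈ s, w i * G i ω := by
        funext ω; rw [Finset.sum_insert ha, hwa]; ring
      rw [e1, e2]
      refine ih w F G (fun i hi => hw0 i (Finset.mem_insert_of_mem hi)) (by rw [hwa] at hw1; linarith)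
        (fun i hi => hF i (Finset.mem_insert_of_mem hi))
        (fun i hi => hG i (Finset.mem_insert_of_mem hi))
        (fun i hi => hFG i (Finset.mem_insert_of_mem hi))
    · set c : ℝ := ∑ i ∈ s, w i with hc
      have hwa_mem : w a ≠ 0 := hwa
      have hwamem := Finset.mem_insert_self a s
      have hwapos : 0 < w a := lt_of_le_of_ne (hw0 a hwamem) (Ne.symm hwa)
      have hc0 : 0 ≤ c := Finset.sum_nonneg fun i hi => hw0 i (Finset.mem_insert_of_mem hi)
      by_cases hcz : c = 0
      · -- w a = 1, all other weights 0
        have hwa1 : w a = 1 := by rw [hcz] at hw1; linarith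
        have hzero : ∀ i ∈ s, w i = 0 := by
          intro i hi
          exact (Finset.sum_eq_zero_iff_of_nonneg
            (fun j hj => hw0 j (Finset.mem_insert_of_mem hj))).mp hcz i hi
        have e1 : (fun ω => ∑ i ∈ insert a s, w i * F i ω) = F a := by
          funext ω
          rw [Finset.sum_insert ha, hwa1, Finset.sum_eq_zero (fun i hi => by rw [hzero i hi]; ring)]
          ring
        have e2 : (fun ω => ∑ i ∈ insert a s, w i * G i ω) = G a := by
          funext ω
          rw [Finset.sum_insert ha, hwa1, Finset.sum_eq_zero (fun i hi => by rw [hzero i hi]; ring)]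
          ring
        rw [e1, e2]
        exact hFG a hwamem hwa
      · have hcpos : 0 < c := lt_of_le_of_ne hc0 (Ne.symm hcz)
        have hwalt : w a < 1 := by linarith
        have hclt : c < 1 := by linarith
        have hcval : c = 1 - w a := by linarith
        set w' : ι → ℝ := fun i => w i / c with hw'
        have hw'0 : ∀ i ∈ s, 0 ≤ w' i :=
          fun i hi => div_nonneg (hw0 i (Finset.mem_insert_of_mem hi)) hc0
        have hw'1 : ∑ i ∈ s, w' i = 1 := by
          simp only [hw', ← Finset.sum_div]
          exact div_self hcz
        have hw'ne : ∀ i, w' i ≠ 0 → w i ≠ 0 := by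
          intro i hne hz
          simp [hw', hz] at hne
        set F' : Hist O A → ℝ := fun ω => ∑ i ∈ s, w' i * F i ω with hF'
        set G' : Hist O A → ℝ := fun ω => ∑ i ∈ s, w' i * G i ω with hG'
        have hRF'G' : R F' G' :=
          ih w' F G hw'0 hw'1
            (fun i hi hne => hF i (Finset.mem_insert_of_mem hi) (hw'ne i hne))
            (fun i hi hne => hG i (Finset.mem_insert_of_mem hi) (hw'ne i hne))
            (fun i hi hne => hFG i (Finset.mem_insert_of_mem hi) (hw'ne i hne))
        have hF'att : IsAttDist T ρ0 ρ F' :=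
          aux_isAttDist_sum s w' F hw'0 hw'1
            (fun i hi hne => hF i (Finset.mem_insert_of_mem hi) (hw'ne i hne))
        have hG'att : IsAttDist T ρ0 ρ G' :=
          aux_isAttDist_sum s w' G hw'0 hw'1
            (fun i hi hne => hG i (Finset.mem_insert_of_mem hi) (hw'ne i hne))
        have hFa : IsAttDist T ρ0 ρ (F a) := hF a hwamem hwa
        have hGa : IsAttDist T ρ0 ρ (G a) := hG a hwamem hwa
        have e1 : (fun ω => ∑ i ∈ insert a s, w i * F i ω) = mix (w a) (F a) F' := by
          funext ω
          rw [Finset.sum_insert ha]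
          simp only [mix, hF', hcval.symm, Finset.mul_sum]
          congr 1
          apply Finset.sum_congr rfl
          intro i hi
          simp only [hw']
          field_simp
        have e2 : (fun ω => ∑ i ∈ insert a s, w i * G i ω) = mix (w a) (G a) G' := by
          funext ω
          rw [Finset.sum_insert ha]
          simp only [mix, hG', hcval.symm, Finset.mul_sum]
          congr 1
          apply Finset.sum_congr rfl
          intro i hi
          simp only [hw']
          field_simp
        rw [e1, e2]
        have step1 : R (mix (w a) (F a) F') (mix (w a) (G a) F') :=
          hR.2.2.2 (w a) hwapos hwalt (F a) (G a) F' hFa hGa hF'att (hFG a hwamem hwa)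
        have step2 : R (mix c F' (G a)) (mix c G' (G a)) :=
          hR.2.2.2 c hcpos hclt F' G' (G a) hF'att hG'att hGa hRF'G'
        have e3 : mix c F' (G a) = mix (w a) (G a) F' := by
          funext ω; simp only [mix, hcval]; ring
        have e4 : mix c G' (G a) = mix (w a) (G a) G' := by
          funext ω; simp only [mix, hcval]; ring
        rw [e3, e4] at step2
        exact hR.2.1 _ _ _
          (aux_isAttDist_mix (le_of_lt hwapos) (le_of_lt hwalt) hFa hF'att)
          (aux_isAttDist_mix (le_of_lt hwapos) (le_of_lt hwalt) hGa hF'att)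
          (aux_isAttDist_mix (le_of_lt hwapos) (le_of_lt hwalt) hGa hG'att)
          step1 step2

end DPP

/-- a policy preferring `D^π(h)` to every `D^π(h·a)` is optimal. -/
theorem optimal_of_greedy {O A : Type*} [Fintype O] [Fintype A]
    [DecidableEq O] [DecidableEq A] [Nonempty O] [Nonempty A]
    (T : ℕ) (ρ0 : O → ℝ) (ρ : Hist O A → A → O → ℝ) (henv : IsEnv ρ0 ρ)
    (R : (Hist O A → ℝ) → (Hist O A → ℝ) → Prop)
    (hR : RestrTotalConsistentPreorder T ρ0 ρ R)
    (π : Hist O A → A → ℝ) (hπ : IsPolicy π)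
    (hgreedy : ∀ h, Attainable ρ0 ρ h → hlen h < T → ∀ a : A,
      R (DpiA T ρ π h a) (DpiH T ρ π h)) :
    OptimalPolicy T ρ0 ρ R π := by
  have key : ∀ n (h : Hist O A), Attainable ρ0 ρ h → hlen h + n = T →
      ∀ π', IsPolicy π' → R (Dpi ρ π' n h) (Dpi ρ π n h) := by
    intro n
    induction n with
    | zero =>
      intro h hatt hT π' hπ'
      have e : Dpi ρ π' 0 h = Dpi ρ π 0 h := by
        funext ω; simp [Dpi]
      rw [e]
      exact hR.1 _ (aux_isAttDist_Dpi henv hπ hatt hT)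
    | succ n ih =>
      intro h hatt hT π' hπ'
      set G : A → Hist O A → ℝ :=
        fun a ω => ∑ o, ρ h a o * Dpi ρ π n (hext h a o) ω with hGdef
      set F : A → Hist O A → ℝ :=
        fun a ω => ∑ o, ρ h a o * Dpi ρ π' n (hext h a o) ω with hFdef
      have hextT : ∀ a o, hlen (hext h a o) + n = T := by
        intro a o; rw [aux_hlen_hext]; omega
      have hattext : ∀ a o, ρ h a o ≠ 0 → Attainable ρ0 ρ (hext h a o) := by
        intro a o hne
        exact Attainable.step h a o hatt (lt_of_le_of_ne ((henv.2 h a).1 o) (Ne.symm hne))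
      have hFatt : ∀ a, IsAttDist T ρ0 ρ (F a) := by
        intro a
        exact aux_isAttDist_sum Finset.univ (ρ h a) (fun o => Dpi ρ π' n (hext h a o))
          (fun o _ => (henv.2 h a).1 o) ((henv.2 h a).2)
          (fun o _ hne => aux_isAttDist_Dpi henv hπ' (hattext a o hne) (hextT a o))
      have hGatt : ∀ a, IsAttDist T ρ0 ρ (G a) := by
        intro a
        exact aux_isAttDist_sum Finset.univ (ρ h a) (fun o => Dpi ρ π n (hext h a o))
          (fun o _ => (henv.2 h a).1 o) ((henv.2 h a).2)
          (fun o _ hne => aux_isAttDist_Dpi henv hπ (hattext a o hne) (hextT a o))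
      have hFG : ∀ a, R (F a) (G a) := by
        intro a
        exact aux_R_sum hR Finset.univ (ρ h a) (fun o => Dpi ρ π' n (hext h a o))
          (fun o => Dpi ρ π n (hext h a o))
          (fun o _ => (henv.2 h a).1 o) ((henv.2 h a).2)
          (fun o _ hne => aux_isAttDist_Dpi henv hπ' (hattext a o hne) (hextT a o))
          (fun o _ hne => aux_isAttDist_Dpi henv hπ (hattext a o hne) (hextT a o))
          (fun o _ hne => ih (hext h a o) (hattext a o hne) (hextT a o) π' hπ')
      -- the π'-weighted mixture of the G a
      set S : Hist O A → ℝ := fun ω => ∑ a, π' h a * G a ω with hSdef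
      have eF : Dpi ρ π' (n + 1) h = fun ω => ∑ a, π' h a * F a ω := by
        funext ω; simp [Dpi, hFdef]
      have eG : Dpi ρ π (n + 1) h = fun ω => ∑ a, π h a * G a ω := by
        funext ω; simp [Dpi, hGdef]
      have hDatt : IsAttDist T ρ0 ρ (Dpi ρ π (n + 1) h) :=
        aux_isAttDist_Dpi henv hπ hatt hT
      have hSatt : IsAttDist T ρ0 ρ S :=
        aux_isAttDist_sum Finset.univ (π' h) G (fun a _ => (hπ' h).1 a) ((hπ' h).2)
          (fun a _ _ => hGatt a)
      have step1 : R (Dpi ρ π' (n + 1) h) S := by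
        rw [eF, hSdef]
        exact aux_R_sum hR Finset.univ (π' h) F G (fun a _ => (hπ' h).1 a) ((hπ' h).2)
          (fun a _ _ => hFatt a) (fun a _ _ => hGatt a) (fun a _ _ => hFG a)
      -- greedy step
      have hlenlt : hlen h < T := by omega
      have hGdpia : ∀ a, G a = DpiA T ρ π h a := by
        intro a
        funext ω
        simp only [DpiA, hGdef]
        have : T - hlen h - 1 = n := by omega
        rw [this]
      have hgr : ∀ a, R (G a) (Dpi ρ π (n + 1) h) := by
        intro a
        have := hgreedy h hatt hlenlt a
        rw [← hGdpia a] at this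
        have e : DpiH T ρ π h = Dpi ρ π (n + 1) h := by
          simp only [DpiH]
          have : T - hlen h = n + 1 := by omega
          rw [this]
        rw [e] at this
        exact this
      have step2 : R S (Dpi ρ π (n + 1) h) := by
        have := aux_R_sum hR Finset.univ (π' h) G (fun _ => Dpi ρ π (n + 1) h)
          (fun a _ => (hπ' h).1 a) ((hπ' h).2)
          (fun a _ _ => hGatt a) (fun a _ _ => hDatt) (fun a _ _ => hgr a)
        have e : (fun ω => ∑ a, π' h a * Dpi ρ π (n + 1) h ω) = Dpi ρ π (n + 1) h := by
          funext ω
          rw [← Finset.sum_mul, (hπ' h).2, one_mul]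
        rw [e] at this
        exact this
      have hD'att : IsAttDist T ρ0 ρ (Dpi ρ π' (n + 1) h) :=
        aux_isAttDist_Dpi henv hπ' hatt hT
      exact hR.2.1 _ _ _ hD'att hSatt hDatt step1 step2
  intro h hatt hle π' hπ'
  have hT : hlen h + (T - hlen h) = T := by omega
  simp only [DpiH]
  exact key (T - hlen h) h hatt hT π' hπ'
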